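/- Let $\hat{y} > 0$ and suppose $\rho^* \in [0,1)$ is a maximizer of $\mathrm{EI}(\rho) = (\rho-1)\hat{y}\,\Phi(Z(\rho)) + \sqrt{1-\rho^2}\,\phi(Z(\rho))$ over $[0,1)$, where $Z(\rho) = \frac{(\rho-1)\hat{y}}{\sqrt{1-\rho^2}}$. Then $\rho^* \sqrt{\frac{1+\rho^*}{1-\rho^*}} \ge \hat{y}$. -/

import Mathlib

open Real Set MeasureTheory Filter Topology

/-- Standard normal pdf. -/
noncomputable def gaussPdf (x : ℝ) : ℝ := (Real.sqrt (2 * Real.pi))⁻¹ * Real.exp (-x ^ 2 / 2)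

/-- Standard normal cdf. -/
noncomputable def gaussCdf (x : ℝ) : ℝ := ∫ t in Set.Iic x, gaussPdf t

/-- Standardized improvement. -/
noncomputable def Zfun (yhat ρ : ℝ) : ℝ := (ρ - 1) * yhat / Real.sqrt (1 - ρ ^ 2)

/-- Expected improvement parametrized by the correlation. -/
noncomputable def EI (yhat ρ : ℝ) : ℝ :=
  (ρ - 1) * yhat * gaussCdf (Zfun yhat ρ) + Real.sqrt (1 - ρ ^ 2) * gaussPdf (Zfun yhat ρ)

lemma gaussPdf_pos (x : ℝ) : 0 < gaussPdf x := by
  unfold gaussPdf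
  positivity

lemma gaussPdf_eq (x : ℝ) : gaussPdf x = (Real.sqrt (2 * Real.pi))⁻¹ * Real.exp (-(1/2) * x ^ 2) := by
  unfold gaussPdf; ring_nf

lemma continuous_gaussPdf : Continuous gaussPdf := by
  unfold gaussPdf
  fun_prop

lemma gaussPdf_funeq : gaussPdf = fun x => (Real.sqrt (2 * Real.pi))⁻¹ * Real.exp (-(1/2) * x ^ 2) :=
  funext gaussPdf_eq

lemma integrable_gaussPdf : Integrable gaussPdf := by
  rw [gaussPdf_funeq]
  exact (integrable_exp_neg_mul_sq (by norm_num : (0:ℝ) < 1/2)).const_mul _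

lemma integrable_mul_gaussPdf : Integrable (fun t : ℝ => t * gaussPdf t) := by
  simp only [gaussPdf_eq]
  have := (integrable_mul_exp_neg_mul_sq (by norm_num : (0:ℝ) < 1/2)).const_mul (Real.sqrt (2 * Real.pi))⁻¹
  exact this.congr (ae_of_all _ fun x => by ring)

lemma integrable_sq_mul_gaussPdf : Integrable (fun t : ℝ => t ^ 2 * gaussPdf t) := by
  simp only [gaussPdf_eq]
  have h := (integrable_rpow_mul_exp_neg_mul_sq (by norm_num : (0:ℝ) < 1/2)
    (by norm_num : (-1:ℝ) < 2)).const_mul (Real.sqrt (2 * Real.pi))⁻¹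
  apply h.congr (ae_of_all _ fun x => ?_)
  have hx : x ^ (2:ℝ) = x ^ (2:ℕ) := by
    rw [← Real.rpow_natCast x 2]; norm_num
  simp only [hx]
  ring

lemma hasDerivAt_gaussPdf (x : ℝ) : HasDerivAt gaussPdf (-x * gaussPdf x) x := by
  have h1 : HasDerivAt (fun t : ℝ => -t ^ 2 / 2) (-x) x := by
    have := ((hasDerivAt_pow 2 x).neg.div_const 2)
    simpa using this.congr_deriv (by ring)
  have h2 := (h1.exp).const_mul (Real.sqrt (2 * Real.pi))⁻¹
  unfold gaussPdf
  refine h2.congr_deriv ?_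
  ring

lemma tendsto_neg_half_sq_atBot : Tendsto (fun x : ℝ => -(1/2) * x ^ 2) atBot atBot := by
  have h1 : Tendsto (fun x : ℝ => x ^ 2) atBot atTop := by
    have h0 : Tendsto (fun x : ℝ => x ^ 2) atTop atTop := tendsto_pow_atTop two_ne_zero
    have := h0.comp tendsto_neg_atBot_atTop
    exact this.congr (fun x => by simp [Function.comp])
  have h2 := h1.const_mul_atTop (show (0:ℝ) < 1/2 by norm_num)
  have h3 := tendsto_neg_atTop_atBot.comp h2
  exact h3.congr (fun x => by simp [Function.comp, neg_mul])

lemma tendsto_gaussPdf_atBot : Tendsto gaussPdf atBot (𝓝 0) := by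
  rw [gaussPdf_funeq, show (0:ℝ) = (Real.sqrt (2 * Real.pi))⁻¹ * 0 by ring]
  exact (Real.tendsto_exp_atBot.comp tendsto_neg_half_sq_atBot).const_mul _

lemma tendsto_exp_neg_half_atTop : Tendsto (fun x : ℝ => Real.exp (-(1/2) * x)) atTop (𝓝 0) := by
  have h1 : Tendsto (fun x : ℝ => -(1/2) * x) atTop atBot := by
    have := tendsto_neg_atTop_atBot.comp (tendsto_id.const_mul_atTop (show (0:ℝ) < 1/2 by norm_num))
    exact this.congr (fun x => by simp [Function.comp, neg_mul])
  exact Real.tendsto_exp_atBot.comp h1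

lemma tendsto_mul_gaussPdf_atBot : Tendsto (fun t : ℝ => t * gaussPdf t) atBot (𝓝 0) := by
  have key : Tendsto (fun x : ℝ => x ^ (1:ℝ) * Real.exp (-(1/2) * x ^ 2)) atTop (𝓝 0) := by
    have h := rpow_mul_exp_neg_mul_sq_isLittleO_exp_neg (show (0:ℝ) < 1/2 by norm_num) 1
    exact h.tendsto_zero_of_tendsto tendsto_exp_neg_half_atTop
  have key2 : Tendsto (fun x : ℝ => x * Real.exp (-(1/2) * x ^ 2)) atTop (𝓝 0) := by
    apply key.congr'
    filter_upwards [eventually_gt_atTop (0:ℝ)] with x hx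
    rw [Real.rpow_one]
  have key3 : Tendsto (fun t : ℝ => t * Real.exp (-(1/2) * t ^ 2)) atBot (𝓝 0) := by
    have h := (key2.comp tendsto_neg_atBot_atTop).neg
    rw [neg_zero] at h
    exact h.congr (fun x => by simp [Function.comp, neg_sq])
  rw [gaussPdf_funeq, show (0:ℝ) = (Real.sqrt (2 * Real.pi))⁻¹ * 0 by ring]
  exact (key3.const_mul _).congr (fun x => by ring)

lemma integral_Iic_mul_gaussPdf (z : ℝ) :
    ∫ t in Iic z, t * gaussPdf t = -gaussPdf z := by
  have h := integral_Iic_of_hasDerivAt_of_tendsto' (a := z)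
    (f := fun t => -gaussPdf t) (f' := fun t => t * gaussPdf t)
    (m := 0)
    (fun x _ => by exact (hasDerivAt_gaussPdf x).neg.congr_deriv (by ring))
    integrable_mul_gaussPdf.integrableOn
    (by simpa using tendsto_gaussPdf_atBot.neg)
  simpa using h

lemma integral_Iic_sq_mul_gaussPdf (z : ℝ) :
    ∫ t in Iic z, t ^ 2 * gaussPdf t = gaussCdf z - z * gaussPdf z := by
  have hder : ∀ x : ℝ, HasDerivAt (fun t => -(t * gaussPdf t))
      (x ^ 2 * gaussPdf x - gaussPdf x) x := by
    intro x
    have h1 : HasDerivAt (fun t : ℝ => t * gaussPdf t)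
        (1 * gaussPdf x + x * (-x * gaussPdf x)) x :=
      (hasDerivAt_id x).mul (hasDerivAt_gaussPdf x)
    exact h1.neg.congr_deriv (by ring)
  have hint : IntegrableOn (fun t : ℝ => t ^ 2 * gaussPdf t - gaussPdf t) (Iic z) :=
    (integrable_sq_mul_gaussPdf.sub integrable_gaussPdf).integrableOn
  have h := integral_Iic_of_hasDerivAt_of_tendsto' (a := z)
    (f := fun t => -(t * gaussPdf t)) (f' := fun t => t ^ 2 * gaussPdf t - gaussPdf t)
    (m := 0) (fun x _ => hder x) hint
    (by simpa using tendsto_mul_gaussPdf_atBot.neg)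
  rw [integral_sub integrable_sq_mul_gaussPdf.integrableOn integrable_gaussPdf.integrableOn] at h
  have : gaussCdf z = ∫ t in Iic z, gaussPdf t := rfl
  rw [← this] at h
  linarith [h]

lemma gaussCdf_pos (z : ℝ) : 0 < gaussCdf z := by
  unfold gaussCdf
  rw [setIntegral_pos_iff_support_of_nonneg_ae
    (ae_of_all _ (fun x => (gaussPdf_pos x).le)) integrable_gaussPdf.integrableOn]
  have : Function.support gaussPdf = univ := by
    ext x; simp [Function.support, (gaussPdf_pos x).ne']
  rw [this, univ_inter]
  simp

lemma gaussCdf_eq (x : ℝ) : gaussCdf x = gaussCdf 0 + ∫ t in (0:ℝ)..x, gaussPdf t := by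
  have := intervalIntegral.integral_Iic_sub_Iic
    integrable_gaussPdf.integrableOn integrable_gaussPdf.integrableOn (a := 0) (b := x)
  unfold gaussCdf
  linarith [this]

lemma hasDerivAt_gaussCdf (x : ℝ) : HasDerivAt gaussCdf (gaussPdf x) x := by
  have h : HasDerivAt (fun u => ∫ t in (0:ℝ)..u, gaussPdf t) (gaussPdf x) x :=
    intervalIntegral.integral_hasDerivAt_right
      integrable_gaussPdf.intervalIntegrable
      (continuous_gaussPdf.stronglyMeasurableAtFilter _ _)
      continuous_gaussPdf.continuousAt
  have h2 := h.const_add (gaussCdf 0)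
  have : gaussCdf = fun u => gaussCdf 0 + ∫ t in (0:ℝ)..u, gaussPdf t := funext gaussCdf_eq
  rw [this]
  exact h2

lemma gauss_cauchy_schwarz (z : ℝ) :
    gaussPdf z ^ 2 ≤ gaussCdf z * (gaussCdf z - z * gaussPdf z) := by
  set I := gaussCdf z with hI
  set J := gaussPdf z with hJ
  have hIpos := gaussCdf_pos z
  set c : ℝ := J / I with hc
  have key : 0 ≤ ∫ t in Iic z, (c + t) ^ 2 * gaussPdf t :=
    setIntegral_nonneg measurableSet_Iic (fun t _ => mul_nonneg (sq_nonneg _) (gaussPdf_pos t).le)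
  have expand : ∀ t : ℝ, (c + t) ^ 2 * gaussPdf t
      = c ^ 2 * gaussPdf t + (2 * c) * (t * gaussPdf t) + t ^ 2 * gaussPdf t := by
    intro t; ring
  rw [show (fun t => (c + t) ^ 2 * gaussPdf t)
      = fun t => c ^ 2 * gaussPdf t + (2 * c) * (t * gaussPdf t) + t ^ 2 * gaussPdf t
    from funext expand] at key
  have int1 : Integrable (fun t : ℝ => c ^ 2 * gaussPdf t) :=
    integrable_gaussPdf.const_mul _
  have int2 : Integrable (fun t : ℝ => (2 * c) * (t * gaussPdf t)) :=
    integrable_mul_gaussPdf.const_mul _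
  have int12 : Integrable (fun t : ℝ => c ^ 2 * gaussPdf t + (2 * c) * (t * gaussPdf t)) :=
    int1.add int2
  rw [integral_add int12.integrableOn integrable_sq_mul_gaussPdf.integrableOn,
    integral_add int1.integrableOn int2.integrableOn,
    MeasureTheory.integral_const_mul, MeasureTheory.integral_const_mul,
    integral_Iic_mul_gaussPdf, integral_Iic_sq_mul_gaussPdf] at key
  have hIc : ∫ t in Iic z, gaussPdf t = I := rfl
  rw [hIc] at key
  -- key : 0 ≤ c^2 * I + 2*c*(-J) + (I - z*J)
  have hcI : c * I = J := div_mul_cancel₀ J hIpos.ne'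
  nlinarith [key, hIpos, sq_nonneg c]


lemma hasDerivAt_EI (yhat ρ : ℝ) (h1 : -1 < ρ) (h2 : ρ < 1) :
    HasDerivAt (EI yhat)
      (yhat * gaussCdf (Zfun yhat ρ)
        - ρ / Real.sqrt (1 - ρ ^ 2) * gaussPdf (Zfun yhat ρ)) ρ := by
  have hpos : 0 < 1 - ρ ^ 2 := by nlinarith
  set s := Real.sqrt (1 - ρ ^ 2) with hs
  have hspos : 0 < s := Real.sqrt_pos.mpr hpos
  have hs2 : s ^ 2 = 1 - ρ ^ 2 := Real.sq_sqrt hpos.le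
  set Z := Zfun yhat ρ with hZdef
  have hZs : (ρ - 1) * yhat = s * Z := by
    rw [hZdef]; unfold Zfun; rw [← hs]; field_simp
  -- derivative of r ↦ 1 - r^2
  have hq : HasDerivAt (fun r : ℝ => 1 - r ^ 2) (-(2 * ρ)) ρ := by
    have := (hasDerivAt_pow 2 ρ).const_sub 1
    simpa using this.congr_deriv (by push_cast; ring)
  -- derivative of r ↦ sqrt (1 - r^2)
  have hsq : HasDerivAt (fun r : ℝ => Real.sqrt (1 - r ^ 2)) (-ρ / s) ρ := by
    have h := (Real.hasDerivAt_sqrt hpos.ne').comp ρ hq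
    have : 1 / (2 * Real.sqrt (1 - ρ ^ 2)) * -(2 * ρ) = -ρ / s := by
      rw [← hs]; field_simp
    exact (h.congr_deriv this)
  -- derivative of numerator
  have hnum : HasDerivAt (fun r : ℝ => (r - 1) * yhat) yhat ρ := by
    have := ((hasDerivAt_id ρ).sub_const 1).mul_const yhat
    simpa using this
  -- derivative of Zfun
  set Zd : ℝ := (yhat * s - (ρ - 1) * yhat * (-ρ / s)) / s ^ 2 with hZd
  have hZ : HasDerivAt (Zfun yhat) Zd ρ := by
    have h := hnum.div hsq hspos.ne'
    have : Zfun yhat = fun r => (r - 1) * yhat / Real.sqrt (1 - r ^ 2) := rfl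
    rw [this]
    exact h.congr_deriv (by rw [hZd, ← hs])
  have hΦ : HasDerivAt (fun r => gaussCdf (Zfun yhat r)) (gaussPdf Z * Zd) ρ :=
    HasDerivAt.comp (h₂ := gaussCdf) ρ (hasDerivAt_gaussCdf Z) hZ
  have hφ : HasDerivAt (fun r => gaussPdf (Zfun yhat r)) (-Z * gaussPdf Z * Zd) ρ :=
    HasDerivAt.comp (h₂ := gaussPdf) ρ (hasDerivAt_gaussPdf Z) hZ
  have hA := hnum.mul hΦ
  have hB := hsq.mul hφ
  have hEI := hA.add hB
  have : EI yhat = fun r => (r - 1) * yhat * gaussCdf (Zfun yhat r)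
      + Real.sqrt (1 - r ^ 2) * gaussPdf (Zfun yhat r) := rfl
  rw [this]
  refine hEI.congr_deriv ?_
  rw [← hs]
  linear_combination (gaussPdf Z * Zd) * hZs


set_option maxHeartbeats 2000000 in
theorem ei_maximizer_correlation_bound (yhat : ℝ) (hy : 0 < yhat) (ρstar : ℝ)
    (hρ : ρstar ∈ Set.Ico (0 : ℝ) 1)
    (hmax : ∀ ρ ∈ Set.Ico (0 : ℝ) 1, EI yhat ρ ≤ EI yhat ρstar) :
    ρstar * Real.sqrt ((1 + ρstar) / (1 - ρstar)) ≥ yhat := by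
  obtain ⟨hρ0, hρ1⟩ := hρ
  have hpos : 0 < 1 - ρstar ^ 2 := by nlinarith
  set s := Real.sqrt (1 - ρstar ^ 2) with hsdef
  have hspos : 0 < s := Real.sqrt_pos.mpr hpos
  have hs2 : s ^ 2 = 1 - ρstar ^ 2 := Real.sq_sqrt hpos.le
  set Z := Zfun yhat ρstar with hZdef
  set Φ := gaussCdf Z with hPhidef
  set φv := gaussPdf Z with hphidef
  have hΦpos : 0 < Φ := gaussCdf_pos Z
  have hφpos : 0 < φv := gaussPdf_pos Z
  have hD := hasDerivAt_EI yhat ρstar (by linarith) hρ1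
  rw [← hsdef, ← hZdef, ← hPhidef, ← hphidef] at hD
  -- the (one-sided) derivative at the maximizer is ≤ 0
  have hDle : yhat * Φ - ρstar / s * φv ≤ 0 := by
    by_contra hcon
    push_neg at hcon
    have hslope := hasDerivAt_iff_tendsto_slope.mp hD
    have hmono : 𝓝[>] ρstar ≤ 𝓝[≠] ρstar :=
      nhdsWithin_mono ρstar (fun x hx => ne_of_gt hx)
    have hev : ∀ᶠ x in 𝓝[>] ρstar, 0 < slope (EI yhat) ρstar x :=
      (hslope.mono_left hmono).eventually (eventually_gt_nhds hcon)
    have hev2 : ∀ᶠ x in 𝓝[>] ρstar, x ∈ Ioo ρstar 1 :=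
      Ioo_mem_nhdsGT_of_mem ⟨le_refl _, hρ1⟩
    obtain ⟨x, hx1, hx2⟩ := (hev.and hev2).exists
    rw [slope_def_field] at hx1
    have hxρ : 0 < x - ρstar := sub_pos.mpr hx2.1
    have hgt : EI yhat ρstar < EI yhat x := by
      rcases div_pos_iff.mp hx1 with ⟨h, _⟩ | ⟨_, h⟩
      · linarith
      · linarith
    have := hmax x ⟨le_trans hρ0 hx2.1.le, hx2.2⟩
    linarith
  have hZs : Z * s = (ρstar - 1) * yhat := by
    rw [hZdef]; unfold Zfun; rw [← hsdef]; field_simp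
  have h1' : yhat * Φ * s ≤ ρstar * φv := by
    have h := mul_le_mul_of_nonneg_right (by linarith : yhat * Φ ≤ ρstar / s * φv) hspos.le
    calc yhat * Φ * s ≤ ρstar / s * φv * s := h
    _ = ρstar * φv := by field_simp
  have hρpos : 0 < ρstar := by
    rcases lt_or_eq_of_le hρ0 with h | h
    · exact h
    · exfalso
      have h0 : yhat * Φ * s ≤ 0 := by rw [← h] at h1'; linarith
      nlinarith [mul_pos (mul_pos hy hΦpos) hspos]
  have hCS : φv ^ 2 ≤ Φ * (Φ - Z * φv) := gauss_cauchy_schwarz Z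
  have hCSs := mul_le_mul_of_nonneg_right hCS hspos.le
  have hCS' : φv ^ 2 * s ≤ Φ ^ 2 * s + (1 - ρstar) * yhat * φv * Φ := by
    calc φv ^ 2 * s ≤ Φ * (Φ - Z * φv) * s := hCSs
    _ = Φ ^ 2 * s + (1 - ρstar) * yhat * φv * Φ := by linear_combination (-(Φ * φv)) * hZs
  have e2 := mul_le_mul_of_nonneg_left h1'
    (mul_nonneg (by linarith : (0:ℝ) ≤ 1 - ρstar) hφpos.le)
  have e3 := mul_le_mul_of_nonneg_right hCS' hspos.le
  have h2' : φv ^ 2 * (1 - ρstar) ≤ Φ ^ 2 * ((1 - ρstar) * (1 + ρstar)) := by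
    nlinarith [e3, e2, hs2]
  have h2 : φv ^ 2 ≤ (1 + ρstar) * Φ ^ 2 := by
    have h1mρ : 0 < 1 - ρstar := by linarith
    nlinarith [h2', h1mρ]
  have h4 : (yhat * Φ * s) ^ 2 ≤ (ρstar * φv) ^ 2 :=
    pow_le_pow_left₀ (by positivity) h1' 2
  have e5 := mul_le_mul_of_nonneg_left h2 (sq_nonneg ρstar)
  have h4'' : (yhat * Φ * s) ^ 2 = yhat ^ 2 * Φ ^ 2 * (1 - ρstar ^ 2) := by
    linear_combination (yhat ^ 2 * Φ ^ 2) * hs2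
  have hchain : yhat ^ 2 * Φ ^ 2 * (1 - ρstar ^ 2) ≤ ρstar ^ 2 * ((1 + ρstar) * Φ ^ 2) := by
    rw [← h4'']
    refine le_trans h4 ?_
    nlinarith [e5]
  have h5 : yhat ^ 2 * (1 - ρstar) ≤ ρstar ^ 2 := by
    have hcancel : 0 < (1 + ρstar) * Φ ^ 2 := by positivity
    nlinarith [hchain, hcancel]
  set A := Real.sqrt ((1 + ρstar) / (1 - ρstar)) with hAdef
  have hA0 : 0 ≤ A := Real.sqrt_nonneg _
  have hA2 : A ^ 2 = (1 + ρstar) / (1 - ρstar) :=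
    Real.sq_sqrt (div_nonneg (by linarith) (by linarith))
  have hA2' : A ^ 2 * (1 - ρstar) = 1 + ρstar := by
    rw [hA2, div_mul_cancel₀ _ (by intro hc; linarith [hc] : (1:ℝ) - ρstar ≠ 0)]
  have e7 : ρstar ^ 2 * (A ^ 2 * (1 - ρstar)) = ρstar ^ 2 * (1 + ρstar) := by rw [hA2']
  have h6 : yhat ^ 2 ≤ (ρstar * A) ^ 2 := by
    nlinarith [h5, e7, pow_nonneg hρ0 3, sub_pos.mpr hρ1]
  have : yhat ≤ ρstar * A := by
    nlinarith [h6, hy, mul_nonneg hρ0 hA0]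
  linarith
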